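/- Fix k and let X_j ∈ ℝ^{n×p_j} for all j, ξ > 0 and w_j'' > 0 for j ≠ k. Suppose the collection (Γ̂_j)_{j≠k}, with Γ̂_j ∈ ℝ^{p_j×p_k}, is a global minimizer of the objective (Γ_j)_{j≠k} ↦ (1/(2n))‖X_k − Σ_{j≠k} X_jΓ_j‖_F² + Σ_{j≠k} (ξ w_j''/√n) ‖X_jΓ_j‖_*. Let S_k = X_k − Σ_{j≠k} X_jΓ̂_j and for each j ≠ k let Q_j be the orthogonal projection matrix onto the column space of X_j. Then for every j ≠ k, d₁(Q_jS_k) ≤ √n ξ w_j''. -/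

import Mathlib

open Matrix

noncomputable def frobInner {m n : ℕ} (A B : Matrix (Fin m) (Fin n) ℝ) : ℝ := (Aᵀ * B).trace

noncomputable def frobNorm {m n : ℕ} (A : Matrix (Fin m) (Fin n) ℝ) : ℝ := Real.sqrt (Aᵀ * A).trace

/-- The positive semidefinite square root of a positive semidefinite matrix, as
`Matrix.PosSemidef.sqrt` was defined in the older Mathlib. -/
noncomputable def psdSqrt {n : ℕ} {M : Matrix (Fin n) (Fin n) ℝ} (hA : M.PosSemidef) :
    Matrix (Fin n) (Fin n) ℝ :=
  hA.1.eigenvectorUnitary.1 * diagonal ((↑) ∘ (Real.sqrt ∘ hA.1.eigenvalues)) *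
    (star hA.1.eigenvectorUnitary : Matrix (Fin n) (Fin n) ℝ)

noncomputable def nucNorm {m n : ℕ} (A : Matrix (Fin m) (Fin n) ℝ) : ℝ :=
  (psdSqrt (Matrix.posSemidef_conjTranspose_mul_self A)).trace

noncomputable def opNorm {m n : ℕ} (A : Matrix (Fin m) (Fin n) ℝ) : ℝ :=
  ‖LinearMap.toContinuousLinearMap (Matrix.toEuclideanLin A)‖

section psdSqrtUniq
open scoped MatrixOrder

lemma psdSqrt_eq_cfc {n : ℕ} {M : Matrix (Fin n) (Fin n) ℝ} (hM : M.PosSemidef) :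
    psdSqrt hM = CFC.sqrt M := by
  rw [CFC.sqrt_eq_cfc, cfc_nnreal_eq_real _ M hM.nonneg, hM.1.cfc_eq]
  simp only [IsHermitian.cfc, psdSqrt, Unitary.conjStarAlgAut_apply]
  congr 3
  funext i
  simp [Real.coe_sqrt, Real.coe_toNNReal', hM.eigenvalues_nonneg i]

lemma psdSqrt_eq_of_sq_eq {n : ℕ} {C M : Matrix (Fin n) (Fin n) ℝ} (hC : C.PosSemidef)
    (hM : M.PosSemidef) (h : C ^ 2 = M) : C = psdSqrt hM := by
  rw [psdSqrt_eq_cfc, eq_comm, CFC.sqrt_eq_iff M C hM.nonneg hC.nonneg, ← sq, h]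

end psdSqrtUniq

lemma trace_ctms {m n : ℕ} (A : Matrix (Fin m) (Fin n) ℝ) :
    (Aᵀ * A).trace = ∑ j, ∑ i, A i j ^ 2 := by
  simp [Matrix.trace, Matrix.mul_apply, Matrix.diag, sq]

lemma trace_ctms_nonneg {m n : ℕ} (A : Matrix (Fin m) (Fin n) ℝ) :
    0 ≤ (Aᵀ * A).trace := by
  rw [trace_ctms]
  positivity

lemma frobNorm_sq {m n : ℕ} (A : Matrix (Fin m) (Fin n) ℝ) :
    frobNorm A ^ 2 = (Aᵀ * A).trace :=
  Real.sq_sqrt (trace_ctms_nonneg A)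

lemma frobInner_comm {m n : ℕ} (A B : Matrix (Fin m) (Fin n) ℝ) :
    frobInner A B = frobInner B A := by
  rw [frobInner, frobInner, ← Matrix.trace_transpose, Matrix.transpose_mul,
    Matrix.transpose_transpose]

lemma frob_expand {m n : ℕ} (S B : Matrix (Fin m) (Fin n) ℝ) (t : ℝ) :
    frobNorm (S - t • B) ^ 2
      = frobNorm S ^ 2 - 2 * t * frobInner S B + t ^ 2 * frobNorm B ^ 2 := by
  rw [frobNorm_sq, frobNorm_sq, frobNorm_sq]
  have h : (S - t • B)ᵀ * (S - t • B)
      = Sᵀ * S - t • (Sᵀ * B) - t • (Bᵀ * S) + (t * t) • (Bᵀ * B) := by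
    simp only [Matrix.transpose_sub, Matrix.transpose_smul, Matrix.sub_mul, Matrix.mul_sub,
      Matrix.smul_mul, Matrix.mul_smul, smul_smul]
    module
  rw [h]
  simp only [Matrix.trace_add, Matrix.trace_sub, Matrix.trace_smul, smul_eq_mul]
  have h2 : (Bᵀ * S).trace = (Sᵀ * B).trace := by
    rw [← Matrix.trace_transpose (Bᵀ * S), Matrix.transpose_mul, Matrix.transpose_transpose]
  rw [h2, frobInner]
  ring

section spectral
variable {m n : ℕ}

lemma sum_mul_le_sqrt {ι : Type*} [Fintype ι] (f g : ι → ℝ) :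
    ∑ i, f i * g i ≤ Real.sqrt (∑ i, f i ^ 2) * Real.sqrt (∑ i, g i ^ 2) := by
  have h := Finset.sum_mul_sq_le_sq_mul_sq Finset.univ f g
  calc ∑ i, f i * g i ≤ |∑ i, f i * g i| := le_abs_self _
    _ = Real.sqrt ((∑ i, f i * g i) ^ 2) := (Real.sqrt_sq_eq_abs _).symm
    _ ≤ Real.sqrt ((∑ i, f i ^ 2) * ∑ i, g i ^ 2) := Real.sqrt_le_sqrt h
    _ = _ := Real.sqrt_mul (by positivity) _

lemma nucNorm_eq (A : Matrix (Fin m) (Fin n) ℝ) :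
    nucNorm A = ∑ i, Real.sqrt ((Matrix.posSemidef_conjTranspose_mul_self A).1.eigenvalues i) := by
  set h := (Matrix.posSemidef_conjTranspose_mul_self A).1
  rw [nucNorm, psdSqrt, Matrix.trace_mul_comm, ← Matrix.mul_assoc,
    (Matrix.mem_unitaryGroup_iff').mp h.eigenvectorUnitary.2, Matrix.one_mul,
    Matrix.trace_diagonal]
  simp
end spectral

section dual
variable {m n : ℕ} (A : Matrix (Fin m) (Fin n) ℝ)

lemma key_diag :
    (A * ((Matrix.posSemidef_conjTranspose_mul_self A).1.eigenvectorUnitary : Matrix (Fin n) (Fin n) ℝ))ᵀ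
      * (A * ((Matrix.posSemidef_conjTranspose_mul_self A).1.eigenvectorUnitary : Matrix (Fin n) (Fin n) ℝ))
      = diagonal ((Matrix.posSemidef_conjTranspose_mul_self A).1.eigenvalues) := by
  set h := (Matrix.posSemidef_conjTranspose_mul_self A).1
  have := h.conjStarAlgAut_star_eigenvectorUnitary
  simp only [Unitary.conjStarAlgAut_apply, Unitary.coe_star, star_star] at this
  set V : Matrix (Fin n) (Fin n) ℝ := (h.eigenvectorUnitary : Matrix (Fin n) (Fin n) ℝ)
  have hstar : star V = Vᵀ := rfl
  rw [hstar] at this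
  calc (A * V)ᵀ * (A * V) = Vᵀ * (Aᴴ * A) * V := by
        rw [Matrix.transpose_mul]
        have : Aᴴ = Aᵀ := rfl
        rw [this, Matrix.mul_assoc, Matrix.mul_assoc, Matrix.mul_assoc]
    _ = diagonal ((RCLike.ofReal ∘ h.eigenvalues : Fin n → ℝ)) := this
    _ = diagonal h.eigenvalues := by norm_num
end dual

lemma diag_ctms {m n : ℕ} (M : Matrix (Fin m) (Fin n) ℝ) (i : Fin n) :
    (Mᵀ * M) i i = ∑ a, M a i ^ 2 := by
  simp [Matrix.mul_apply, sq]

lemma frobInner_le_nucNorm {m n : ℕ} (A B : Matrix (Fin m) (Fin n) ℝ)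
    (hB : ∀ x : Fin n → ℝ, ∑ a, (B *ᵥ x) a ^ 2 ≤ ∑ i, x i ^ 2) :
    frobInner A B ≤ nucNorm A := by
  set h := (Matrix.posSemidef_conjTranspose_mul_self A).1 with hh
  set V : Matrix (Fin n) (Fin n) ℝ := (h.eigenvectorUnitary : Matrix (Fin n) (Fin n) ℝ) with hV
  have hstar : star V = Vᵀ := rfl
  have hVV : Vᵀ * V = 1 := by
    rw [← hstar]; exact Matrix.mem_unitaryGroup_iff'.mp h.eigenvectorUnitary.2
  have hVV' : V * Vᵀ = 1 := by
    rw [← hstar]; exact Matrix.mem_unitaryGroup_iff.mp h.eigenvectorUnitary.2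
  have step1 : frobInner A B = ∑ i, ∑ a, (A * V) a i * (B * V) a i := by
    have e1 : (A * V)ᵀ * (B * V) = Vᵀ * (Aᵀ * B) * V := by
      rw [Matrix.transpose_mul]
      simp only [Matrix.mul_assoc]
    have e2 : ((A * V)ᵀ * (B * V)).trace = (Aᵀ * B).trace := by
      rw [e1, Matrix.trace_mul_cycle, ← Matrix.mul_assoc, hVV', Matrix.one_mul]
    rw [frobInner, ← e2, Matrix.trace]
    refine Finset.sum_congr rfl fun i _ => ?_
    simp [Matrix.mul_apply, Matrix.diag, mul_comm]
  rw [step1, nucNorm_eq]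
  refine Finset.sum_le_sum fun i _ => ?_
  have hAcol : ∑ a, (A * V) a i ^ 2 = h.eigenvalues i := by
    rw [← diag_ctms, key_diag A, Matrix.diagonal_apply_eq]
  have hBcol : ∑ a, (B * V) a i ^ 2 ≤ 1 := by
    have hx : ∀ a, (B * V) a i = (B *ᵥ fun b => V b i) a := by
      intro a; simp [Matrix.mul_apply, Matrix.mulVec, dotProduct]
    have hVcol : ∑ b, (fun b => V b i) b ^ 2 = 1 := by
      have h1 := diag_ctms V i
      rw [hVV, Matrix.one_apply_eq] at h1
      exact h1.symm
    calc ∑ a, (B * V) a i ^ 2 = ∑ a, (B *ᵥ fun b => V b i) a ^ 2 := by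
          exact Finset.sum_congr rfl fun a _ => by rw [hx]
      _ ≤ ∑ b, (fun b => V b i) b ^ 2 := hB _
      _ = 1 := hVcol
  calc ∑ a, (A * V) a i * (B * V) a i
      ≤ Real.sqrt (∑ a, (A * V) a i ^ 2) * Real.sqrt (∑ a, (B * V) a i ^ 2) :=
        sum_mul_le_sqrt _ _
    _ ≤ Real.sqrt (h.eigenvalues i) * 1 := by
        rw [hAcol]
        exact mul_le_mul_of_nonneg_left
          (by simpa using Real.sqrt_le_sqrt hBcol) (Real.sqrt_nonneg _)
    _ = Real.sqrt (h.eigenvalues i) := mul_one _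

lemma sum_sq_mulVec {m n : ℕ} (U : Matrix (Fin m) (Fin n) ℝ) (x : Fin n → ℝ) :
    ∑ a, (U *ᵥ x) a ^ 2 = x ⬝ᵥ ((Uᵀ * U) *ᵥ x) := by
  rw [← Matrix.mulVec_mulVec, Matrix.dotProduct_mulVec, Matrix.vecMul_transpose]
  simp [dotProduct, sq, mul_comm]

lemma exists_dual_witness {m n : ℕ} (A : Matrix (Fin m) (Fin n) ℝ) :
    ∃ U : Matrix (Fin m) (Fin n) ℝ,
      (∀ x : Fin n → ℝ, ∑ a, (U *ᵥ x) a ^ 2 ≤ ∑ i, x i ^ 2) ∧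
        frobInner A U = nucNorm A := by
  set h := (Matrix.posSemidef_conjTranspose_mul_self A).1 with hh
  set V : Matrix (Fin n) (Fin n) ℝ := (h.eigenvectorUnitary : Matrix (Fin n) (Fin n) ℝ) with hV
  have hstar : star V = Vᵀ := rfl
  have hVV : Vᵀ * V = 1 := by
    rw [← hstar]; exact Matrix.mem_unitaryGroup_iff'.mp h.eigenvectorUnitary.2
  have hVV' : V * Vᵀ = 1 := by
    rw [← hstar]; exact Matrix.mem_unitaryGroup_iff.mp h.eigenvectorUnitary.2
  set lam := h.eigenvalues with hlamdef
  have hlam : ∀ i, 0 ≤ lam i :=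
    fun i => (Matrix.posSemidef_conjTranspose_mul_self A).eigenvalues_nonneg i
  set p : Fin n → ℝ := fun i => if lam i = 0 then 0 else (Real.sqrt (lam i))⁻¹ with hp
  set P : Matrix (Fin n) (Fin n) ℝ := diagonal p with hP
  have hPt : Pᵀ = P := Matrix.diagonal_transpose p
  set U : Matrix (Fin m) (Fin n) ℝ := A * V * P * Vᵀ with hU
  have hdiag : Vᵀ * (Aᵀ * A) * V = diagonal lam := by
    have := key_diag A
    rw [Matrix.transpose_mul] at this
    calc Vᵀ * (Aᵀ * A) * V = Vᵀ * Aᵀ * (A * V) := by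
          simp only [Matrix.mul_assoc]
      _ = diagonal lam := this
  refine ⟨U, ?_, ?_⟩
  · intro x
    have hUtU : Uᵀ * U = V * diagonal (fun i => p i * lam i * p i) * Vᵀ := by
      rw [hU]
      have : (A * V * P * Vᵀ)ᵀ = V * P * (Vᵀ * Aᵀ) := by
        simp only [Matrix.transpose_mul, Matrix.transpose_transpose, hPt]
        simp only [Matrix.mul_assoc]
      rw [this]
      have e : V * P * (Vᵀ * Aᵀ) * (A * V * P * Vᵀ)
          = V * (P * (Vᵀ * (Aᵀ * A) * V) * P) * Vᵀ := by
        simp only [Matrix.mul_assoc]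
      rw [e, hdiag, hP, Matrix.diagonal_mul_diagonal, Matrix.diagonal_mul_diagonal]
    have key : ∑ a, (U *ᵥ x) a ^ 2 = ∑ i, (p i * lam i * p i) * ((Vᵀ *ᵥ x) i)^2 := by
      rw [sum_sq_mulVec, hUtU]
      have : (V * diagonal (fun i => p i * lam i * p i) * Vᵀ) *ᵥ x
          = V *ᵥ (diagonal (fun i => p i * lam i * p i) *ᵥ (Vᵀ *ᵥ x)) := by
        simp only [Matrix.mulVec_mulVec, Matrix.mul_assoc]
      rw [this, Matrix.dotProduct_mulVec, ← Matrix.mulVec_transpose]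
      simp only [dotProduct, Matrix.mulVec_diagonal, sq]
      exact Finset.sum_congr rfl fun i _ => by ring
    have key2 : ∑ i, ((Vᵀ *ᵥ x) i)^2 = ∑ i, x i ^ 2 := by
      have := sum_sq_mulVec Vᵀ x
      rw [Matrix.transpose_transpose, hVV'] at this
      simpa [dotProduct, sq, mul_comm] using this
    rw [key, ← key2]
    refine Finset.sum_le_sum fun i _ => ?_
    have he : p i * lam i * p i ≤ 1 := by
      by_cases hzi : lam i = 0
      · simp [hp, hzi]
      · have hpos : 0 < lam i := lt_of_le_of_ne (hlam i) (Ne.symm hzi)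
        have hs : Real.sqrt (lam i) * Real.sqrt (lam i) = lam i := Real.mul_self_sqrt (hlam i)
        have hsne : Real.sqrt (lam i) ≠ 0 := by positivity
        simp only [hp, if_neg hzi]
        rw [← hs]
        field_simp
        rw [Real.sqrt_sq (Real.sqrt_nonneg _)]
      
    nlinarith [sq_nonneg ((Vᵀ *ᵥ x) i), he, mul_nonneg (mul_nonneg (by positivity : (0:ℝ) ≤ p i) (hlam i)) (by positivity : (0:ℝ) ≤ p i)]
  · rw [frobInner, hU, nucNorm_eq]
    have e1 : Aᵀ * (A * V * P * Vᵀ) = (Aᵀ * A * V * P) * Vᵀ := by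
      simp only [Matrix.mul_assoc]
    have e2 : Vᵀ * (Aᵀ * A * V * P) = (Vᵀ * (Aᵀ * A) * V) * P := by
      simp only [Matrix.mul_assoc]
    rw [e1, Matrix.trace_mul_comm, e2, hdiag, hP, Matrix.diagonal_mul_diagonal,
      Matrix.trace_diagonal]
    refine Finset.sum_congr rfl fun i _ => ?_
    show lam i * p i = Real.sqrt (lam i)
    by_cases hzi : lam i = 0
    · simp [hp, hzi]
    · have hs : Real.sqrt (lam i) * Real.sqrt (lam i) = lam i := Real.mul_self_sqrt (hlam i)
      have hpos : 0 < lam i := lt_of_le_of_ne (hlam i) (Ne.symm hzi)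
      have hsne : Real.sqrt (lam i) ≠ 0 := by positivity
      simp only [hp, if_neg hzi]
      rw [← hs]
      field_simp
      rw [Real.sqrt_sq (Real.sqrt_nonneg _)]

lemma nucNorm_add_le {m n : ℕ} (A C : Matrix (Fin m) (Fin n) ℝ) :
    nucNorm (A + C) ≤ nucNorm A + nucNorm C := by
  obtain ⟨U, hU, hEq⟩ := exists_dual_witness (A + C)
  have split : frobInner (A + C) U = frobInner A U + frobInner C U := by
    rw [frobInner, frobInner, frobInner, Matrix.transpose_add, Matrix.add_mul,
      Matrix.trace_add]
  have h1 := frobInner_le_nucNorm A U hU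
  have h2 := frobInner_le_nucNorm C U hU
  linarith [hEq ▸ split]

lemma nucNorm_zero {m n : ℕ} : nucNorm (0 : Matrix (Fin m) (Fin n) ℝ) = 0 := by
  have h0 : Matrix.PosSemidef (0 : Matrix (Fin n) (Fin n) ℝ) := Matrix.PosSemidef.zero
  have := psdSqrt_eq_of_sq_eq h0 (Matrix.posSemidef_conjTranspose_mul_self
    (0 : Matrix (Fin m) (Fin n) ℝ)) (by simp)
  rw [nucNorm, ← this, Matrix.trace_zero]

lemma nucNorm_vecMulVec {m n : ℕ} (a : Fin m → ℝ) (x : Fin n → ℝ) :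
    nucNorm (Matrix.vecMulVec a x)
      = Real.sqrt (∑ i, a i ^ 2) * Real.sqrt (∑ j, x j ^ 2) := by
  set sa := ∑ i, a i ^ 2 with hsa
  set sx := ∑ j, x j ^ 2 with hsx
  have hsa0 : 0 ≤ sa := by positivity
  have hsx0 : 0 ≤ sx := by positivity
  by_cases hx : sx = 0
  · have hx0 : x = 0 := by
      funext j
      have h := (Finset.sum_eq_zero_iff_of_nonneg
        (fun i (_ : i ∈ Finset.univ) => sq_nonneg (x i))).mp hx j (Finset.mem_univ j)
      exact pow_eq_zero_iff two_ne_zero |>.mp h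
    have hB : Matrix.vecMulVec a x = 0 := by
      rw [hx0]; ext i j; simp [Matrix.vecMulVec_apply]
    rw [hB, nucNorm_zero, hx, Real.sqrt_zero, mul_zero]
  · have hsxpos : 0 < sx := lt_of_le_of_ne hsx0 (Ne.symm hx)
    have hrx : 0 < Real.sqrt sx := Real.sqrt_pos.mpr hsxpos
    set c : ℝ := Real.sqrt sa / Real.sqrt sx with hc
    have hc0 : 0 ≤ c := by positivity
    set C : Matrix (Fin n) (Fin n) ℝ := c • Matrix.vecMulVec x x with hC
    have hCpsd : C.PosSemidef := by
      rw [Matrix.posSemidef_iff_dotProduct_mulVec]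
      constructor
      · ext i j
        simp [hC, Matrix.vecMulVec_apply, mul_comm]
      · intro y
        have h1 : Matrix.vecMulVec x x *ᵥ y = fun i => x i * (x ⬝ᵥ y) := by
          funext i
          simp [Matrix.vecMulVec_apply, Matrix.mulVec, dotProduct,
            Finset.mul_sum, mul_assoc]
        have h2 : star y ⬝ᵥ (C *ᵥ y) = c * ((x ⬝ᵥ y) * (x ⬝ᵥ y)) := by
          rw [hC, Matrix.smul_mulVec, dotProduct_smul, h1]
          simp only [smul_eq_mul, star_trivial]
          congr 1
          simp only [dotProduct]
          rw [Finset.sum_mul]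
          exact Finset.sum_congr rfl fun i _ => by ring
        rw [h2]
        exact mul_nonneg hc0 (mul_self_nonneg _)
    have hmulvv : Matrix.vecMulVec x x * Matrix.vecMulVec x x
        = sx • Matrix.vecMulVec x x := by
      ext i j
      simp only [Matrix.mul_apply, Matrix.vecMulVec_apply, Matrix.smul_apply, smul_eq_mul, hsx]
      rw [Finset.sum_mul]
      exact Finset.sum_congr rfl fun l _ => by ring
    have hctms : (Matrix.vecMulVec a x)ᴴ * Matrix.vecMulVec a x
        = sa • Matrix.vecMulVec x x := by
      ext i j
      simp only [Matrix.mul_apply, Matrix.vecMulVec_apply, Matrix.smul_apply, smul_eq_mul,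
        Matrix.conjTranspose_apply, star_trivial, hsa]
      rw [Finset.sum_mul]
      exact Finset.sum_congr rfl fun l _ => by ring
    have hccsx : c * c * sx = sa := by
      have h1 : c * c = sa / sx := by
        rw [hc, div_mul_div_comm, Real.mul_self_sqrt hsa0, Real.mul_self_sqrt hsx0]
      rw [h1, div_mul_cancel₀ _ hx]
    have hsq : C ^ 2 = (Matrix.vecMulVec a x)ᴴ * (Matrix.vecMulVec a x) := by
      rw [pow_two, hC, Matrix.smul_mul, Matrix.mul_smul, smul_smul, hmulvv, smul_smul,
        hccsx, hctms]
    have hCeq : C = psdSqrt (Matrix.posSemidef_conjTranspose_mul_self (Matrix.vecMulVec a x)) :=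
      psdSqrt_eq_of_sq_eq hCpsd (Matrix.posSemidef_conjTranspose_mul_self _) hsq
    rw [nucNorm, ← hCeq, hC, Matrix.trace_smul]
    have htr : (Matrix.vecMulVec x x).trace = sx := by
      rw [Matrix.trace, hsx]
      exact Finset.sum_congr rfl fun i _ => by
        simp [Matrix.diag, Matrix.vecMulVec_apply, sq]
    rw [htr, smul_eq_mul, hc, div_mul_eq_mul_div, div_eq_iff hrx.ne', mul_assoc,
      Real.mul_self_sqrt hsx0]

lemma euclidean_norm_eq {m : ℕ} (y : EuclideanSpace ℝ (Fin m)) :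
    ‖y‖ = Real.sqrt (∑ i, y i ^ 2) := by
  rw [EuclideanSpace.norm_eq]
  congr 1
  exact Finset.sum_congr rfl fun i _ => by rw [Real.norm_eq_abs, sq_abs]

lemma opNorm_le {m n : ℕ} (A : Matrix (Fin m) (Fin n) ℝ) (c : ℝ) (hc : 0 ≤ c)
    (h : ∀ x : Fin n → ℝ,
      Real.sqrt (∑ a, (A *ᵥ x) a ^ 2) ≤ c * Real.sqrt (∑ i, x i ^ 2)) :
    opNorm A ≤ c := by
  rw [opNorm]
  refine ContinuousLinearMap.opNorm_le_bound _ hc fun x => ?_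
  have e1 : ‖LinearMap.toContinuousLinearMap (Matrix.toEuclideanLin A) x‖
      = Real.sqrt (∑ a, (A *ᵥ (fun i => x i)) a ^ 2) := by
    rw [euclidean_norm_eq]
    rfl
  have e2 : ‖x‖ = Real.sqrt (∑ i, (fun i => x i) i ^ 2) := by
    rw [euclidean_norm_eq]
  rw [e1, e2]
  exact h _

lemma le_of_forall_pos_mul {a b d : ℝ} (H : ∀ t : ℝ, 0 < t → a ≤ t * d + b) : a ≤ b := by
  by_contra hcon
  push_neg at hcon
  set t : ℝ := (a - b) / (2 * (|d| + 1)) with ht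
  have hd : (0:ℝ) < |d| + 1 := by positivity
  have htpos : 0 < t := by
    apply div_pos (by linarith) (by linarith)
  have h1 := H t htpos
  have h2 : t * d ≤ t * |d| := mul_le_mul_of_nonneg_left (le_abs_self d) htpos.le
  have key2 : t * (2 * (|d| + 1)) = a - b := by
    rw [ht, div_mul_cancel₀]
    positivity
  nlinarith [abs_nonneg d]

lemma frobInner_vecMulVec {m n : ℕ} (S : Matrix (Fin m) (Fin n) ℝ) (u : Fin m → ℝ)
    (x : Fin n → ℝ) : frobInner S (Matrix.vecMulVec u x) = u ⬝ᵥ (S *ᵥ x) := by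
  rw [frobInner, Matrix.trace]
  simp only [Matrix.diag, Matrix.mul_apply, Matrix.transpose_apply, Matrix.vecMulVec_apply,
    dotProduct, Matrix.mulVec]
  rw [Finset.sum_comm]
  refine Finset.sum_congr rfl fun a _ => ?_
  simp only [dotProduct, Finset.mul_sum, Finset.sum_mul]
  exact Finset.sum_congr rfl fun i _ => by ring

lemma smul_vecMulVec {m n : ℕ} (t : ℝ) (u : Fin m → ℝ) (x : Fin n → ℝ) :
    Matrix.vecMulVec (t • u) x = t • Matrix.vecMulVec u x := by
  ext i j
  simp [Matrix.vecMulVec_apply, mul_assoc]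

lemma nucNorm_smul_vecMulVec {m n : ℕ} (t : ℝ) (ht : 0 ≤ t) (u : Fin m → ℝ) (x : Fin n → ℝ) :
    nucNorm (Matrix.vecMulVec (t • u) x)
      = t * (Real.sqrt (∑ i, u i ^ 2) * Real.sqrt (∑ j, x j ^ 2)) := by
  rw [nucNorm_vecMulVec]
  have e : ∑ i, (t • u) i ^ 2 = t ^ 2 * ∑ i, u i ^ 2 := by
    rw [Finset.mul_sum]
    exact Finset.sum_congr rfl fun i _ => by simp [smul_eq_mul]; ring
  rw [e, Real.sqrt_mul (by positivity), Real.sqrt_sq ht, mul_assoc]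

lemma dot_sym_mulVec {n : ℕ} (Q : Matrix (Fin n) (Fin n) ℝ) (hQ : Qᵀ = Q)
    (u v : Fin n → ℝ) : u ⬝ᵥ (Q *ᵥ v) = (Q *ᵥ u) ⬝ᵥ v := by
  rw [Matrix.dotProduct_mulVec, ← Matrix.mulVec_transpose, hQ]

lemma mul_vecMulVec {l m n : ℕ} (Q : Matrix (Fin l) (Fin m) ℝ) (u : Fin m → ℝ)
    (x : Fin n → ℝ) : Q * Matrix.vecMulVec u x = Matrix.vecMulVec (Q *ᵥ u) x := by
  ext i j
  simp only [Matrix.mul_apply, Matrix.vecMulVec_apply, Matrix.mulVec, dotProduct]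
  rw [Finset.sum_mul]
  exact Finset.sum_congr rfl fun a _ => by ring

lemma le_of_forall_pos_sq {a b e : ℝ} (H : ∀ t : ℝ, 0 < t → 2*t*a ≤ t^2*e + 2*t*b) :
    a ≤ b := by
  apply le_of_forall_pos_mul (d := e/2)
  intro t ht
  have h2t : (0:ℝ) < 2*t := by linarith
  rw [← mul_le_mul_iff_of_pos_left h2t]
  calc 2*t*a ≤ t^2*e + 2*t*b := H t ht
    _ = 2*t*(t*(e/2)+b) := by ring

set_option maxHeartbeats 2000000 in
/-- KKT consequence of the nuclear-norm-penalized score regression: if `(Γ̂ⱼ)_{j≠k}` globally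
minimizes `(1/(2n))‖X_k − ∑_{j≠k} XⱼΓⱼ‖_F² + ∑_{j≠k} (ξwⱼ''/√n)‖XⱼΓⱼ‖_*`, and `Qⱼ` is the
orthogonal projection onto the column space of `Xⱼ`, then for every `j ≠ k`,
`d₁(QⱼS_k) ≤ √n ξ wⱼ''` where `S_k = X_k − ∑_{j≠k} XⱼΓ̂ⱼ`. -/
theorem stmt_14 (n K : ℕ) (hn : 0 < n) (p : Fin K → ℕ) (k : Fin K)
    (X : ∀ j, Matrix (Fin n) (Fin (p j)) ℝ)
    (ξ : ℝ) (hξ : 0 < ξ) (w : Fin K → ℝ) (hw : ∀ j, 0 < w j)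
    (Γhat : ∀ j, Matrix (Fin (p j)) (Fin (p k)) ℝ)
    (hmin : ∀ Γ : ∀ j, Matrix (Fin (p j)) (Fin (p k)) ℝ,
      (1 / (2 * n)) *
          (frobNorm (X k - ∑ j ∈ Finset.univ.erase k, X j * Γhat j)) ^ 2 +
          ∑ j ∈ Finset.univ.erase k,
            (ξ * w j / Real.sqrt n) * nucNorm (X j * Γhat j) ≤
        (1 / (2 * n)) *
            (frobNorm (X k - ∑ j ∈ Finset.univ.erase k, X j * Γ j)) ^ 2 +
          ∑ j ∈ Finset.univ.erase k,
            (ξ * w j / Real.sqrt n) * nucNorm (X j * Γ j))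
    (Q : Fin K → Matrix (Fin n) (Fin n) ℝ)
    (hQsym : ∀ j, (Q j)ᵀ = Q j) (hQidem : ∀ j, Q j * Q j = Q j)
    (hQX : ∀ j, Q j * X j = X j)
    (hQrange : ∀ j, ∃ M : Matrix (Fin (p j)) (Fin n) ℝ, Q j = X j * M) :
    ∀ j ∈ Finset.univ.erase k,
      opNorm (Q j * (X k - ∑ i ∈ Finset.univ.erase k, X i * Γhat i)) ≤
        Real.sqrt n * ξ * w j := by
  classical
  intro j hj
  obtain ⟨M, hM⟩ := hQrange j
  set S : Matrix (Fin n) (Fin (p k)) ℝ := X k - ∑ i ∈ Finset.univ.erase k, X i * Γhat i with hS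
  have hn' : (0:ℝ) < (n:ℝ) := by exact_mod_cast hn
  have hsn : (0:ℝ) < Real.sqrt n := Real.sqrt_pos.mpr hn'
  set c : ℝ := Real.sqrt n * ξ * w j with hc
  have hc0 : 0 ≤ c := by
    have := (hw j).le
    positivity
  have hcj0 : 0 ≤ ξ * w j / Real.sqrt n := by
    have := (hw j).le
    positivity
  have hnc : (n:ℝ) * (ξ * w j / Real.sqrt n) = c := by
    rw [hc, mul_div_assoc']
    rw [mul_comm ((n:ℝ)) (ξ * w j), mul_div_assoc, Real.div_sqrt]
    ring
  refine opNorm_le _ c hc0 fun x => ?_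
  set u : Fin n → ℝ := (Q j * S) *ᵥ x with hu
  set r : ℝ := Real.sqrt (∑ a, u a ^ 2) with hr
  set s : ℝ := Real.sqrt (∑ i, x i ^ 2) with hs
  have hr0 : 0 ≤ r := Real.sqrt_nonneg _
  have hs0 : 0 ≤ s := Real.sqrt_nonneg _
  have hQu : Q j *ᵥ u = u := by
    rw [hu, Matrix.mulVec_mulVec, ← Matrix.mul_assoc, hQidem j]
  set B : Matrix (Fin n) (Fin (p k)) ℝ := Matrix.vecMulVec u x with hB
  set Δ : Matrix (Fin (p j)) (Fin (p k)) ℝ := M * Matrix.vecMulVec u x with hΔ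
  have hXΔ : X j * Δ = B := by
    rw [hΔ, ← Matrix.mul_assoc, ← hM, mul_vecMulVec, hQu, hB]
  set A0 : Matrix (Fin n) (Fin (p k)) ℝ := X j * Γhat j with hA0
  -- the rest sums
  set R1 : Matrix (Fin n) (Fin (p k)) ℝ :=
    ∑ i ∈ (Finset.univ.erase k).erase j, X i * Γhat i with hR1
  set R2 : ℝ :=
    ∑ i ∈ (Finset.univ.erase k).erase j, (ξ * w i / Real.sqrt n) * nucNorm (X i * Γhat i)
    with hR2
  have hsum0 : ∑ i ∈ Finset.univ.erase k, X i * Γhat i = A0 + R1 :=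
    (Finset.add_sum_erase _ _ hj).symm
  have hpen0 : ∑ i ∈ Finset.univ.erase k, (ξ * w i / Real.sqrt n) * nucNorm (X i * Γhat i)
      = (ξ * w j / Real.sqrt n) * nucNorm A0 + R2 :=
    (Finset.add_sum_erase _ _ hj).symm
  have key : ∀ t : ℝ, 0 < t →
      (1/(2*(n:ℝ))) * frobNorm S ^ 2 + (ξ * w j / Real.sqrt n) * nucNorm A0
        ≤ (1/(2*(n:ℝ))) * frobNorm (S - t • B) ^ 2
          + (ξ * w j / Real.sqrt n) * nucNorm (A0 + t • B) := by
    intro t ht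
    have hmin' := hmin (Function.update Γhat j (Γhat j + t • Δ))
    have hsum1 : ∑ i ∈ Finset.univ.erase k, X i * (Function.update Γhat j (Γhat j + t • Δ)) i
        = (A0 + t • B) + R1 := by
      rw [← Finset.add_sum_erase _ _ hj]
      congr 1
      · rw [Function.update_self, Matrix.mul_add, Matrix.mul_smul, hXΔ, hA0]
      · exact Finset.sum_congr rfl fun i hi => by
          rw [Function.update_of_ne (Finset.ne_of_mem_erase hi)]
    have hpen1 : ∑ i ∈ Finset.univ.erase k,
          (ξ * w i / Real.sqrt n) * nucNorm (X i * (Function.update Γhat j (Γhat j + t • Δ)) i)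
        = (ξ * w j / Real.sqrt n) * nucNorm (A0 + t • B) + R2 := by
      rw [← Finset.add_sum_erase _ _ hj]
      congr 1
      · rw [Function.update_self, Matrix.mul_add, Matrix.mul_smul, hXΔ, hA0]
      · exact Finset.sum_congr rfl fun i hi => by
          rw [Function.update_of_ne (Finset.ne_of_mem_erase hi)]
    rw [hsum1, hpen1, hpen0] at hmin'
    have hres : X k - ((A0 + t • B) + R1) = S - t • B := by
      rw [hS, hsum0]
      abel
    rw [hres] at hmin'
    linarith [hmin']
  -- extract the scalar inequality
  have hfi : frobInner S B = ∑ a, u a ^ 2 := by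
    rw [hB, frobInner_vecMulVec]
    have hQSx : Q j *ᵥ (S *ᵥ x) = u := by rw [hu, Matrix.mulVec_mulVec]
    have h2 : u ⬝ᵥ (S *ᵥ x) = u ⬝ᵥ u := by
      conv_lhs => rw [← hQu]
      rw [← dot_sym_mulVec (Q j) (hQsym j) u (S *ᵥ x), hQSx]
    rw [h2]
    simp [dotProduct, sq]
  have step : ∀ t : ℝ, 0 < t →
      2*t*(∑ a, u a ^ 2) ≤ t^2 * frobNorm B ^ 2 + 2*t*(c*(r*s)) := by
    intro t ht
    have hk := key t ht
    rw [frob_expand, hfi] at hk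
    have htri := nucNorm_add_le A0 (t • B)
    have hsm : nucNorm (t • B) = t * (r * s) := by
      rw [hB, ← smul_vecMulVec, nucNorm_smul_vecMulVec t ht.le, hr, hs]
    rw [hsm] at htri
    have h2 : (ξ * w j / Real.sqrt n) * nucNorm (A0 + t • B)
        ≤ (ξ * w j / Real.sqrt n) * (nucNorm A0 + t * (r * s)) :=
      mul_le_mul_of_nonneg_left htri hcj0
    have hfrac : (0:ℝ) < 1/(2*(n:ℝ)) := by positivity
    -- from hk and h2:
    have h3 : (1/(2*(n:ℝ))) * (2*t*(∑ a, u a ^ 2))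
        ≤ (1/(2*(n:ℝ))) * (t^2 * frobNorm B ^ 2) + (ξ * w j / Real.sqrt n) * (t * (r * s)) := by
      nlinarith [hk, h2]
    have h4 := mul_le_mul_of_nonneg_left h3 (by positivity : (0:ℝ) ≤ 2*(n:ℝ))
    have hcanc : (2*(n:ℝ)) * ((1/(2*(n:ℝ))) * (2*t*(∑ a, u a ^ 2))) = 2*t*(∑ a, u a ^ 2) := by
      field_simp
    have hcanc2 : (2*(n:ℝ)) * ((1/(2*(n:ℝ))) * (t^2 * frobNorm B ^ 2))
        = t^2 * frobNorm B ^ 2 := by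
      field_simp
    have hcanc3 : (2*(n:ℝ)) * ((ξ * w j / Real.sqrt n) * (t * (r * s)))
        = 2*t*(c*(r*s)) := by
      rw [show (2*(n:ℝ)) * ((ξ * w j / Real.sqrt n) * (t * (r * s)))
        = 2 * ((n:ℝ) * (ξ * w j / Real.sqrt n)) * (t * (r*s)) from by ring, hnc]
      ring
    calc 2*t*(∑ a, u a ^ 2) = (2*(n:ℝ)) * ((1/(2*(n:ℝ))) * (2*t*(∑ a, u a ^ 2))) := hcanc.symm
      _ ≤ (2*(n:ℝ)) * ((1/(2*(n:ℝ))) * (t^2 * frobNorm B ^ 2)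
            + (ξ * w j / Real.sqrt n) * (t * (r * s))) := by
          rw [mul_le_mul_iff_of_pos_left (by positivity : (0:ℝ) < 2*(n:ℝ))]
          exact h3
      _ = t^2 * frobNorm B ^ 2 + 2*t*(c*(r*s)) := by
          rw [mul_add, hcanc2, hcanc3]
  have hlim : (∑ a, u a ^ 2) ≤ c * (r * s) := le_of_forall_pos_sq step
  have hrsq : r ^ 2 = ∑ a, u a ^ 2 := Real.sq_sqrt (by positivity)
  -- conclude r ≤ c * s
  show r ≤ c * s
  rcases eq_or_lt_of_le hr0 with h0 | hpos
  · rw [← h0]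
    positivity
  · have : r * r ≤ c * (r * s) := by rw [← sq, hrsq]; exact hlim
    nlinarith [this, hpos]
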